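/- (Equivalence of first-order stationary policies and Nash equilibria) In an n-agent tabular discounted MDP with direct distributed policy parameterization, assume that d_θ(s) > 0 for every state s and every feasible θ. Then a policy θ* is a Nash equilibrium (J_i(θ*_i, θ*_{-i}) ≥ J_i(θ'_i, θ*_{-i}) for all feasible θ'_i and all i) if and only if it is first-order stationary (⟨θ'_i − θ*_i, ∇_{θ_i} J_i(θ*)⟩ ≤ 0 for all feasible θ'_i and all i). -/

import Mathlib

open Finset

namespace MAMDP

variable {n : ℕ} {S : Type} [Fintype S] [DecidableEq S]
  {A : Fin n → Type} [∀ i, Fintype (A i)] [∀ i, DecidableEq (A i)]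

/-- Joint product policy probability. -/
def jointPi (θ : ∀ i, S → A i → ℝ) (s : S) (a : ∀ i, A i) : ℝ :=
  ∏ i, θ i s (a i)

/-- One-step evolution of a state distribution under the joint policy. -/
def stepDist (P : S → (∀ i, A i) → S → ℝ) (θ : ∀ i, S → A i → ℝ) (μ : S → ℝ) : S → ℝ :=
  fun s' => ∑ s, ∑ a, μ s * jointPi θ s a * P s a s'

/-- State distribution after `t` steps, starting from `μ`. -/
def visit (P : S → (∀ i, A i) → S → ℝ) (θ : ∀ i, S → A i → ℝ) (t : ℕ) (μ : S → ℝ) : S → ℝ :=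
  (stepDist P θ)^[t] μ

/-- Point mass at `s0`. -/
def deltaDist (s0 : S) : S → ℝ := fun s => if s = s0 then 1 else 0

/-- Discounted state visitation distribution `d_θ` for initial distribution `ρ`. -/
noncomputable def dvisit (P : S → (∀ i, A i) → S → ℝ) (θ : ∀ i, S → A i → ℝ) (γ : ℝ)
    (ρ : S → ℝ) (s : S) : ℝ :=
  (1 - γ) * ∑' t : ℕ, γ ^ t * visit P θ t ρ s

/-- Expected one-step reward at state `s` under the joint policy. -/
def expRew (rw : S → (∀ i, A i) → ℝ) (θ : ∀ i, S → A i → ℝ) (s : S) : ℝ :=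
  ∑ a, jointPi θ s a * rw s a

/-- Value function: expected discounted sum of rewards starting from state `s`. -/
noncomputable def Vval (P : S → (∀ i, A i) → S → ℝ) (θ : ∀ i, S → A i → ℝ) (γ : ℝ)
    (rw : S → (∀ i, A i) → ℝ) (s : S) : ℝ :=
  ∑' t : ℕ, γ ^ t * ∑ s', visit P θ t (deltaDist s) s' * expRew rw θ s'

/-- Q-function. -/
noncomputable def Qval (P : S → (∀ i, A i) → S → ℝ) (θ : ∀ i, S → A i → ℝ) (γ : ℝ)
    (rw : S → (∀ i, A i) → ℝ) (s : S) (a : ∀ i, A i) : ℝ :=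
  rw s a + γ * ∑ s', P s a s' * Vval P θ γ rw s'

/-- Total discounted reward `J` under initial distribution `ρ`. -/
noncomputable def Jval (P : S → (∀ i, A i) → S → ℝ) (θ : ∀ i, S → A i → ℝ) (γ : ℝ)
    (rw : S → (∀ i, A i) → ℝ) (ρ : S → ℝ) : ℝ :=
  ∑ s, ρ s * Vval P θ γ rw s

/-- Averaged Q-function of agent `i`: average of `Q(s, a)` with `a i = ai` fixed,
weighted by the other agents' policies. -/
noncomputable def Qbar (P : S → (∀ i, A i) → S → ℝ) (θ : ∀ i, S → A i → ℝ) (γ : ℝ)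
    (rw : S → (∀ i, A i) → ℝ) (i : Fin n) (s : S) (ai : A i) : ℝ :=
  ∑ a : ∀ j, A j, if a i = ai then
    (∏ j ∈ Finset.univ.erase i, θ j s (a j)) * Qval P θ γ rw s a else 0

/-- Averaged advantage function of agent `i`. -/
noncomputable def Abar (P : S → (∀ i, A i) → S → ℝ) (θ : ∀ i, S → A i → ℝ) (γ : ℝ)
    (rw : S → (∀ i, A i) → ℝ) (i : Fin n) (s : S) (ai : A i) : ℝ :=
  Qbar P θ γ rw i s ai - Vval P θ γ rw s

/-- Entries of the policy gradient `∇_{θ_i} J_i(θ)`: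
`(1/(1-γ)) d_θ(s) Q̄_i^θ(s, a_i)`. -/
noncomputable def gradJ (P : S → (∀ i, A i) → S → ℝ) (θ : ∀ i, S → A i → ℝ) (γ : ℝ)
    (rw : S → (∀ i, A i) → ℝ) (ρ : S → ℝ) (i : Fin n) (s : S) (ai : A i) : ℝ :=
  (1 / (1 - γ)) * dvisit P θ γ ρ s * Qbar P θ γ rw i s ai

/-- Feasibility of agent `i`'s parameters: a point of `Δ(A_i)^{|S|}`. -/
def feasibleAgent (i : Fin n) (θi : S → A i → ℝ) : Prop :=
  ∀ s, (∀ a, 0 ≤ θi s a) ∧ ∑ a, θi s a = 1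

/-- Feasibility of a joint parameter `θ ∈ X = ∏_i Δ(A_i)^{|S|}`. -/
def feasible (θ : ∀ i, S → A i → ℝ) : Prop := ∀ i, feasibleAgent i (θ i)

/-- `P` is a transition kernel. -/
def stochMat (P : S → (∀ i, A i) → S → ℝ) : Prop :=
  ∀ s a, (∀ s', 0 ≤ P s a s') ∧ ∑ s', P s a s' = 1

/-- `ρ` is a probability distribution on states. -/
def initDist (ρ : S → ℝ) : Prop := (∀ s, 0 ≤ ρ s) ∧ ∑ s, ρ s = 1

/-- Nash equilibrium. -/
def isNE (P : S → (∀ i, A i) → S → ℝ) (γ : ℝ) (r : Fin n → S → (∀ i, A i) → ℝ)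
    (ρ : S → ℝ) (θ : ∀ i, S → A i → ℝ) : Prop :=
  feasible θ ∧ ∀ (i : Fin n) (θi' : S → A i → ℝ), feasibleAgent i θi' →
    Jval P (Function.update θ i θi') γ (r i) ρ ≤ Jval P θ γ (r i) ρ

/-- Strict Nash equilibrium. -/
def strictNE (P : S → (∀ i, A i) → S → ℝ) (γ : ℝ) (r : Fin n → S → (∀ i, A i) → ℝ)
    (ρ : S → ℝ) (θ : ∀ i, S → A i → ℝ) : Prop :=
  feasible θ ∧ ∀ (i : Fin n) (θi' : S → A i → ℝ), feasibleAgent i θi' → θi' ≠ θ i →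
    Jval P (Function.update θ i θi') γ (r i) ρ < Jval P θ γ (r i) ρ

/-- Markov potential game with potential `φ`. -/
def isPotential (P : S → (∀ i, A i) → S → ℝ) (γ : ℝ) (r : Fin n → S → (∀ i, A i) → ℝ)
    (φ : S → (∀ i, A i) → ℝ) : Prop :=
  ∀ (θ : ∀ i, S → A i → ℝ), feasible θ → ∀ (i : Fin n) (θi' : S → A i → ℝ),
    feasibleAgent i θi' → ∀ s,
    Vval P (Function.update θ i θi') γ (r i) s - Vval P θ γ (r i) s
      = Vval P (Function.update θ i θi') γ φ s - Vval P θ γ φ s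

/-- Squared Euclidean distance between two joint parameters. -/
def polNormSq (x y : ∀ i, S → A i → ℝ) : ℝ :=
  ∑ i, ∑ s, ∑ a, (x i s a - y i s a) ^ 2

/-- The deterministic (pure) joint policy picking `astar i s`. -/
def purePol (astar : ∀ i : Fin n, S → A i) : ∀ i, S → A i → ℝ :=
  fun i s a => if a = astar i s then 1 else 0

end MAMDP

open MAMDP

set_option linter.unusedSectionVars false
set_option maxHeartbeats 1000000

section Aux

variable {n : ℕ} {S : Type} [Fintype S] [DecidableEq S]
  {A : Fin n → Type} [∀ i, Fintype (A i)] [∀ i, DecidableEq (A i)]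
  {P : S → (∀ i, A i) → S → ℝ} {θ θ' : ∀ i, S → A i → ℝ} {γ : ℝ}

lemma jointPi_nonneg (hθ : feasible θ) (s : S) (a : ∀ i, A i) :
    0 ≤ jointPi θ s a :=
  Finset.prod_nonneg fun i _ => (hθ i s).1 (a i)

lemma jointPi_sum (hθ : feasible θ) (s : S) : ∑ a, jointPi θ s a = 1 := by
  unfold jointPi
  rw [← Fintype.piFinset_univ, ← Finset.prod_univ_sum]
  simp only [(fun i => (hθ i s).2 : ∀ i, ∑ a, θ i s a = 1), Finset.prod_const_one]

lemma initDist_delta (s0 : S) : initDist (deltaDist s0) := by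
  constructor
  · intro s; unfold deltaDist; split <;> norm_num
  · simp [deltaDist]

lemma stepDist_delta (s0 s' : S) :
    stepDist P θ (deltaDist s0) s' = ∑ a, jointPi θ s0 a * P s0 a s' := by
  unfold stepDist
  rw [Finset.sum_eq_single s0]
  · simp [deltaDist]
  · intro b _ hb; simp [deltaDist, hb]
  · intro h; exact absurd (Finset.mem_univ s0) h

lemma stepDist_initDist (hP : stochMat P) (hθ : feasible θ) {μ : S → ℝ}
    (hμ : initDist μ) : initDist (stepDist P θ μ) := by
  constructor
  · intro s'
    apply Finset.sum_nonneg; intro s _; apply Finset.sum_nonneg; intro a _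
    exact mul_nonneg (mul_nonneg (hμ.1 s) (jointPi_nonneg hθ s a)) ((hP s a).1 s')
  · have key : ∀ s, ∑ s', ∑ a, μ s * jointPi θ s a * P s a s' = μ s := by
      intro s
      rw [Finset.sum_comm]
      have h1 : ∀ a, ∑ s', μ s * jointPi θ s a * P s a s' = μ s * jointPi θ s a := by
        intro a; rw [← Finset.mul_sum, (hP s a).2, mul_one]
      rw [Finset.sum_congr rfl fun a _ => h1 a, ← Finset.mul_sum, jointPi_sum hθ, mul_one]
    unfold stepDist
    rw [Finset.sum_comm, Finset.sum_congr rfl fun s _ => key s, hμ.2]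

lemma visit_initDist (hP : stochMat P) (hθ : feasible θ) (t : ℕ) {μ : S → ℝ}
    (hμ : initDist μ) : initDist (visit P θ t μ) := by
  induction t with
  | zero => simpa [visit] using hμ
  | succ t ih =>
    have h : visit P θ (t + 1) μ = stepDist P θ (visit P θ t μ) :=
      Function.iterate_succ_apply' _ _ _
    rw [h]; exact stepDist_initDist hP hθ ih

lemma stepDist_linear (μ : S → ℝ) (s' : S) :
    stepDist P θ μ s' = ∑ s0, μ s0 * stepDist P θ (deltaDist s0) s' := by
  simp only [stepDist_delta, Finset.mul_sum]
  unfold stepDist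
  exact Finset.sum_congr rfl fun s _ => Finset.sum_congr rfl fun a _ => by ring

lemma visit_succ (t : ℕ) (μ : S → ℝ) :
    visit P θ (t + 1) μ = visit P θ t (stepDist P θ μ) := by
  unfold visit; rw [Function.iterate_succ_apply]

lemma visit_linear (t : ℕ) (μ : S → ℝ) (s' : S) :
    visit P θ t μ s' = ∑ s0, μ s0 * visit P θ t (deltaDist s0) s' := by
  induction t generalizing μ with
  | zero => simp [visit, deltaDist, mul_ite, Finset.sum_ite_eq]
  | succ t ih =>
    rw [visit_succ, ih]
    have h2 : ∀ s1 : S, visit P θ (t + 1) (deltaDist s1) s'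
        = ∑ s0, stepDist P θ (deltaDist s1) s0 * visit P θ t (deltaDist s0) s' := by
      intro s1; rw [visit_succ, ih]
    calc ∑ s0, stepDist P θ μ s0 * visit P θ t (deltaDist s0) s'
        = ∑ s0, ∑ s1, μ s1 * stepDist P θ (deltaDist s1) s0 * visit P θ t (deltaDist s0) s' := by
          refine Finset.sum_congr rfl fun s0 _ => ?_
          rw [stepDist_linear, Finset.sum_mul]
      _ = ∑ s1, μ s1 * ∑ s0, stepDist P θ (deltaDist s1) s0 * visit P θ t (deltaDist s0) s' := by
          rw [Finset.sum_comm]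
          exact Finset.sum_congr rfl fun s1 _ => by rw [Finset.mul_sum]; exact Finset.sum_congr rfl fun s0 _ => by ring
      _ = ∑ s1, μ s1 * visit P θ (t + 1) (deltaDist s1) s' := by
          exact Finset.sum_congr rfl fun s1 _ => by rw [h2]

lemma summable_Fk (hP : stochMat P) (hθ : feasible θ) (hγ0 : 0 ≤ γ) (hγ1 : γ < 1)
    {μ : S → ℝ} (hμ : initDist μ) (c : S → ℝ) :
    Summable (fun t : ℕ => γ ^ t * ∑ s', visit P θ t μ s' * c s') := by
  set C : ℝ := ∑ s', |c s'| with hC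
  have key : ∀ t, |∑ s', visit P θ t μ s' * c s'| ≤ C := by
    intro t
    have hv := visit_initDist hP hθ t hμ
    calc |∑ s', visit P θ t μ s' * c s'| ≤ ∑ s', |visit P θ t μ s' * c s'| :=
          Finset.abs_sum_le_sum_abs _ _
      _ = ∑ s', visit P θ t μ s' * |c s'| := by
          refine Finset.sum_congr rfl fun s' _ => ?_
          rw [abs_mul, abs_of_nonneg (hv.1 s')]
      _ ≤ ∑ s', 1 * |c s'| := by
          refine Finset.sum_le_sum fun s' _ => ?_
          refine mul_le_mul_of_nonneg_right ?_ (abs_nonneg _)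
          calc visit P θ t μ s' ≤ ∑ s'', visit P θ t μ s'' :=
                Finset.single_le_sum (fun s'' _ => hv.1 s'') (Finset.mem_univ s')
            _ = 1 := hv.2
      _ = C := by simp [hC]
  refine Summable.of_norm_bounded (g := fun t => γ ^ t * C)
    ((summable_geometric_of_lt_one hγ0 hγ1).mul_right C) fun t => ?_
  rw [Real.norm_eq_abs, abs_mul, abs_pow, abs_of_nonneg hγ0]
  exact mul_le_mul_of_nonneg_left (key t) (pow_nonneg hγ0 t)

/-- Generalized value functional. -/
noncomputable def Fk (P : S → (∀ i, A i) → S → ℝ) (θ : ∀ i, S → A i → ℝ) (γ : ℝ)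
    (c : S → ℝ) (μ : S → ℝ) : ℝ :=
  ∑' t : ℕ, γ ^ t * ∑ s', visit P θ t μ s' * c s'

lemma Vval_eq_Fk (rw : S → (∀ i, A i) → ℝ) (s : S) :
    Vval P θ γ rw s = Fk P θ γ (expRew rw θ) (deltaDist s) := rfl

lemma Fk_linear (hP : stochMat P) (hθ : feasible θ) (hγ0 : 0 ≤ γ) (hγ1 : γ < 1)
    (c : S → ℝ) (μ : S → ℝ) :
    Fk P θ γ c μ = ∑ s0, μ s0 * Fk P θ γ c (deltaDist s0) := by
  unfold Fk
  rw [Finset.sum_congr rfl fun (s0 : S) _ =>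
    (tsum_mul_left (a := μ s0)
      (f := fun t : ℕ => γ ^ t * ∑ s', visit P θ t (deltaDist s0) s' * c s')).symm]
  rw [← Summable.tsum_finsetSum (fun s0 _ =>
    ((summable_Fk hP hθ hγ0 hγ1 (initDist_delta s0) c).mul_left (μ s0)))]
  refine tsum_congr fun t => ?_
  have h1 : ∑ s', visit P θ t μ s' * c s'
      = ∑ s0, μ s0 * ∑ s', visit P θ t (deltaDist s0) s' * c s' := by
    simp only [visit_linear t μ, Finset.sum_mul, Finset.mul_sum]
    rw [Finset.sum_comm]
    exact Finset.sum_congr rfl fun s0 _ => Finset.sum_congr rfl fun s' _ => by ring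
  rw [h1, Finset.mul_sum]
  exact Finset.sum_congr rfl fun s0 _ => by ring

lemma Fk_bellman (hP : stochMat P) (hθ : feasible θ) (hγ0 : 0 ≤ γ) (hγ1 : γ < 1)
    (c : S → ℝ) (s : S) :
    Fk P θ γ c (deltaDist s)
      = c s + γ * ∑ s', stepDist P θ (deltaDist s) s' * Fk P θ γ c (deltaDist s') := by
  unfold Fk
  rw [Summable.tsum_eq_zero_add (summable_Fk hP hθ hγ0 hγ1 (initDist_delta s) c)]
  have h0 : γ ^ 0 * ∑ s', visit P θ 0 (deltaDist s) s' * c s' = c s := by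
    simp [visit, deltaDist, ite_mul, Finset.sum_ite_eq]
  have hsucc : ∀ t : ℕ, γ ^ (t + 1) * ∑ s', visit P θ (t + 1) (deltaDist s) s' * c s'
      = γ * (γ ^ t * ∑ s', visit P θ t (stepDist P θ (deltaDist s)) s' * c s') := by
    intro t; rw [visit_succ, pow_succ]; ring
  rw [h0]
  congr 1
  rw [tsum_congr hsucc, tsum_mul_left]
  congr 1
  have : (∑' t : ℕ, γ ^ t * ∑ s', visit P θ t (stepDist P θ (deltaDist s)) s' * c s')
      = Fk P θ γ c (stepDist P θ (deltaDist s)) := rfl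
  rw [this, Fk_linear hP hθ hγ0 hγ1]
  simp only [Fk]

/-- Mixed Bellman-type expansion: mixing policy `θm`, value policy `θ`. -/
lemma sum_jointPi_Qval (rw : S → (∀ i, A i) → ℝ) (θm : ∀ i, S → A i → ℝ) (s : S) :
    ∑ a, jointPi θm s a * Qval P θ γ rw s a
      = expRew rw θm s + γ * ∑ s', stepDist P θm (deltaDist s) s' * Vval P θ γ rw s' := by
  unfold Qval expRew
  simp only [mul_add, Finset.sum_add_distrib]
  congr 1
  simp only [stepDist_delta, Finset.sum_mul, Finset.mul_sum]
  rw [Finset.sum_comm]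
  exact Finset.sum_congr rfl fun a _ => Finset.sum_congr rfl fun s' _ => by ring

lemma Vval_bellman (hP : stochMat P) (hθ : feasible θ) (hγ0 : 0 ≤ γ) (hγ1 : γ < 1)
    (rw : S → (∀ i, A i) → ℝ) (s : S) :
    Vval P θ γ rw s = ∑ a, jointPi θ s a * Qval P θ γ rw s a := by
  rw [sum_jointPi_Qval, Vval_eq_Fk, Fk_bellman hP hθ hγ0 hγ1]
  simp only [← Vval_eq_Fk]

/-- Key reduction of the averaged Q-function. -/
lemma sum_Qbar (rw : S → (∀ i, A i) → ℝ) (i : Fin n) (θi' : S → A i → ℝ) (s : S) :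
    ∑ ai, θi' s ai * Qbar P θ γ rw i s ai
      = ∑ a : ∀ j, A j, jointPi (Function.update θ i θi') s a * Qval P θ γ rw s a := by
  unfold Qbar
  simp only [Finset.mul_sum, mul_ite, mul_zero]
  rw [Finset.sum_comm]
  refine Finset.sum_congr rfl fun a _ => ?_
  have hcollapse : (∑ ai, if a i = ai then
      θi' s ai * ((∏ j ∈ Finset.univ.erase i, θ j s (a j)) * Qval P θ γ rw s a) else 0)
      = θi' s (a i) * ((∏ j ∈ Finset.univ.erase i, θ j s (a j)) * Qval P θ γ rw s a) := by
    rw [Finset.sum_ite_eq]; simp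
  rw [hcollapse]
  have hjp : jointPi (Function.update θ i θi') s a
      = θi' s (a i) * ∏ j ∈ Finset.univ.erase i, θ j s (a j) := by
    unfold jointPi
    rw [← Finset.mul_prod_erase Finset.univ _ (Finset.mem_univ i), Function.update_self]
    congr 1
    exact Finset.prod_congr rfl fun j hj => by
      rw [Function.update_of_ne (Finset.ne_of_mem_erase hj)]
  rw [hjp]; ring

lemma sum_Qbar_self (hP : stochMat P) (hθ : feasible θ) (hγ0 : 0 ≤ γ) (hγ1 : γ < 1)
    (rw : S → (∀ i, A i) → ℝ) (i : Fin n) (s : S) :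
    ∑ ai, θ i s ai * Qbar P θ γ rw i s ai = Vval P θ γ rw s := by
  rw [sum_Qbar, Function.update_eq_self, ← Vval_bellman hP hθ hγ0 hγ1]

lemma feasible_update (hθ : feasible θ) {i : Fin n} {θi' : S → A i → ℝ}
    (hθi' : feasibleAgent i θi') : feasible (Function.update θ i θi') := by
  intro j
  rcases eq_or_ne j i with rfl | hj
  · rwa [Function.update_self]
  · rw [Function.update_of_ne hj]; exact hθ j

lemma fixed_unique (hP : stochMat P) (hθ' : feasible θ') (hγ0 : 0 ≤ γ) (hγ1 : γ < 1)
    (E : S → ℝ) (hE : ∀ s, E s = γ * ∑ s', stepDist P θ' (deltaDist s) s' * E s') :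
    ∀ s, E s = 0 := by
  intro s
  by_contra hs
  have hne : (Finset.univ : Finset S).Nonempty := ⟨s, Finset.mem_univ s⟩
  obtain ⟨s0, -, hs0⟩ := Finset.exists_max_image Finset.univ (fun s => |E s|) hne
  have hM : 0 < |E s0| := lt_of_lt_of_le (abs_pos.2 hs) (hs0 s (Finset.mem_univ s))
  have hq := stepDist_initDist hP hθ' (initDist_delta s0)
  have hcontr : |E s0| ≤ γ * |E s0| := by
    calc |E s0| = γ * |∑ s', stepDist P θ' (deltaDist s0) s' * E s'| := by
          rw [hE s0, abs_mul, abs_of_nonneg hγ0]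
      _ ≤ γ * ∑ s', stepDist P θ' (deltaDist s0) s' * |E s0| := by
          refine mul_le_mul_of_nonneg_left ?_ hγ0
          calc |∑ s', stepDist P θ' (deltaDist s0) s' * E s'|
              ≤ ∑ s', |stepDist P θ' (deltaDist s0) s' * E s'| := Finset.abs_sum_le_sum_abs _ _
            _ ≤ ∑ s', stepDist P θ' (deltaDist s0) s' * |E s0| := by
                refine Finset.sum_le_sum fun s' _ => ?_
                rw [abs_mul, abs_of_nonneg (hq.1 s')]
                exact mul_le_mul_of_nonneg_left (hs0 s' (Finset.mem_univ s')) (hq.1 s')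
      _ = γ * |E s0| := by rw [← Finset.sum_mul, hq.2, one_mul]
  nlinarith

/-- Performance difference lemma, Fk form. -/
lemma Jdiff (hP : stochMat P) (hθ : feasible θ) (hγ0 : 0 ≤ γ) (hγ1 : γ < 1)
    {ρ : S → ℝ} (hρ : initDist ρ) (rw : S → (∀ i, A i) → ℝ) (i : Fin n)
    {θi' : S → A i → ℝ} (hθi' : feasibleAgent i θi') :
    Jval P (Function.update θ i θi') γ rw ρ - Jval P θ γ rw ρ
      = Fk P (Function.update θ i θi') γ
          (fun s => ∑ ai, θi' s ai * Qbar P θ γ rw i s ai - Vval P θ γ rw s) ρ := by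
  set θ'' := Function.update θ i θi' with hθ''
  have hθ'f : feasible θ'' := feasible_update hθ hθi'
  set g : S → ℝ := fun s => ∑ ai, θi' s ai * Qbar P θ γ rw i s ai - Vval P θ γ rw s with hg
  -- g s = expRew rw θ'' s + γ * ∑ q'' Vθ - Vθ s
  have hg_eq : ∀ s, g s = expRew rw θ'' s
      + γ * ∑ s', stepDist P θ'' (deltaDist s) s' * Vval P θ γ rw s' - Vval P θ γ rw s := by
    intro s
    rw [hg]
    simp only
    rw [sum_Qbar, ← hθ'', sum_jointPi_Qval]
  -- Bellman for V θ''
  have hbell : ∀ s, Vval P θ'' γ rw s = expRew rw θ'' s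
      + γ * ∑ s', stepDist P θ'' (deltaDist s) s' * Vval P θ'' γ rw s' := by
    intro s
    rw [Vval_eq_Fk, Fk_bellman hP hθ'f hγ0 hγ1]
    simp only [← Vval_eq_Fk]
  -- D satisfies same recursion
  set D : S → ℝ := fun s => Fk P θ'' γ g (deltaDist s) with hD
  have hDbell : ∀ s, D s = g s + γ * ∑ s', stepDist P θ'' (deltaDist s) s' * D s' :=
    fun s => Fk_bellman hP hθ'f hγ0 hγ1 g s
  set E : S → ℝ := fun s => (Vval P θ'' γ rw s - Vval P θ γ rw s) - D s with hEdef
  have hE : ∀ s, E s = γ * ∑ s', stepDist P θ'' (deltaDist s) s' * E s' := by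
    intro s
    have h1 := hbell s
    have h2 := hDbell s
    have h3 := hg_eq s
    simp only [hEdef, mul_sub, Finset.sum_sub_distrib]
    rw [h1, h2, h3]
    ring
  have hE0 := fixed_unique hP hθ'f hγ0 hγ1 E hE
  have hVD : ∀ s, Vval P θ'' γ rw s - Vval P θ γ rw s = D s := by
    intro s; have := hE0 s; simp only [hEdef] at this; linarith
  unfold Jval
  rw [← Finset.sum_sub_distrib]
  rw [Fk_linear hP hθ'f hγ0 hγ1 g ρ]
  refine Finset.sum_congr rfl fun s _ => ?_
  rw [← mul_sub, hVD s]

/-- Resolvent form of `dvisit` pairings. -/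
lemma sum_dvisit_mul (hP : stochMat P) (hθ : feasible θ) (hγ0 : 0 ≤ γ) (hγ1 : γ < 1)
    {ρ : S → ℝ} (hρ : initDist ρ) (c : S → ℝ) :
    ∑ s, dvisit P θ γ ρ s * c s = (1 - γ) * Fk P θ γ c ρ := by
  unfold dvisit Fk
  have hsum : ∀ s : S, Summable (fun t : ℕ => γ ^ t * visit P θ t ρ s * c s) := by
    intro s
    refine Summable.of_norm_bounded (g := fun t => γ ^ t * |c s|)
      ((summable_geometric_of_lt_one hγ0 hγ1).mul_right _) fun t => ?_
    have hv := visit_initDist hP hθ t hρ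
    rw [Real.norm_eq_abs, abs_mul, abs_mul, abs_pow, abs_of_nonneg hγ0,
      abs_of_nonneg (hv.1 s)]
    refine mul_le_mul_of_nonneg_right ?_ (abs_nonneg _)
    refine mul_le_of_le_one_right (pow_nonneg hγ0 t) ?_
    calc visit P θ t ρ s ≤ ∑ s'', visit P θ t ρ s'' :=
          Finset.single_le_sum (fun s'' _ => hv.1 s'') (Finset.mem_univ s)
      _ = 1 := hv.2
  have h1 : ∀ s : S, ((1 - γ) * ∑' t : ℕ, γ ^ t * visit P θ t ρ s) * c s
      = (1 - γ) * ∑' t : ℕ, γ ^ t * visit P θ t ρ s * c s := by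
    intro s
    rw [mul_assoc, ← tsum_mul_right]
  rw [Finset.sum_congr rfl fun s _ => h1 s, ← Finset.mul_sum]
  congr 1
  rw [← Summable.tsum_finsetSum (fun s _ => hsum s)]
  refine tsum_congr fun t => ?_
  rw [Finset.mul_sum]
  exact Finset.sum_congr rfl fun s _ => by ring

end Aux


/-- Equivalence of Nash equilibria and first-order stationary policies under the
assumption that every state is visited with positive probability. -/
theorem stmt8 {n : ℕ} {S : Type} [Fintype S] [DecidableEq S]
    {A : Fin n → Type} [∀ i, Fintype (A i)] [∀ i, DecidableEq (A i)]
    (P : S → (∀ i, A i) → S → ℝ) (hP : stochMat P)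
    (r : Fin n → S → (∀ i, A i) → ℝ) (hr : ∀ i s a, 0 ≤ r i s a ∧ r i s a ≤ 1)
    (γ : ℝ) (hγ0 : 0 ≤ γ) (hγ1 : γ < 1)
    (ρ : S → ℝ) (hρ : initDist ρ)
    (hd : ∀ θ : ∀ i, S → A i → ℝ, feasible θ → ∀ s, 0 < dvisit P θ γ ρ s)
    (θstar : ∀ i, S → A i → ℝ) (hθstar : feasible θstar) :
    (∀ (i : Fin n) (θi' : S → A i → ℝ), feasibleAgent i θi' →
        Jval P (Function.update θstar i θi') γ (r i) ρ ≤ Jval P θstar γ (r i) ρ) ↔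
    (∀ (i : Fin n) (θi' : S → A i → ℝ), feasibleAgent i θi' →
        ∑ s, ∑ a, (θi' s a - θstar i s a) * gradJ P θstar γ (r i) ρ i s a ≤ 0) := by
  have h1γ : (0:ℝ) < 1 - γ := by linarith
  have hSne : Nonempty S := by
    rcases isEmpty_or_nonempty S with hS | hS
    · exfalso; have := hρ.2; rw [Finset.univ_eq_empty, Finset.sum_empty] at this; norm_num at this
    · exact hS
  have hAne : ∀ i : Fin n, Nonempty (A i) := by
    intro i
    obtain ⟨s⟩ := hSne
    rcases isEmpty_or_nonempty (A i) with hA | hA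
    · exfalso; have := (hθstar i s).2; rw [Finset.univ_eq_empty, Finset.sum_empty] at this
      norm_num at this
    · exact hA
  have hsq : ∀ (i : Fin n) (s : S),
      ∑ ai, θstar i s ai * Qbar P θstar γ (r i) i s ai = Vval P θstar γ (r i) s :=
    fun i s => sum_Qbar_self hP hθstar hγ0 hγ1 (r i) i s
  have hconv : ∀ (i : Fin n) (η : S → A i → ℝ), feasibleAgent i η →
      ∀ (s : S) (c : A i → ℝ) (B : ℝ), (∀ ai, c ai ≤ B) → ∑ ai, η s ai * c ai ≤ B := by
    intro i η hη s c B hB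
    calc ∑ ai, η s ai * c ai ≤ ∑ ai, η s ai * B :=
          Finset.sum_le_sum fun ai _ => mul_le_mul_of_nonneg_left (hB ai) ((hη s).1 ai)
      _ = B := by rw [← Finset.sum_mul, (hη s).2, one_mul]
  have hgrad : ∀ (i : Fin n) (θi' : S → A i → ℝ),
      ∑ s, ∑ a, (θi' s a - θstar i s a) * gradJ P θstar γ (r i) ρ i s a
      = (1/(1-γ)) * ∑ s, dvisit P θstar γ ρ s *
          (∑ ai, θi' s ai * Qbar P θstar γ (r i) i s ai - Vval P θstar γ (r i) s) := by
    intro i θi'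
    rw [Finset.mul_sum]
    refine Finset.sum_congr rfl fun s _ => ?_
    rw [← hsq i s, ← Finset.sum_sub_distrib, Finset.mul_sum, Finset.mul_sum]
    refine Finset.sum_congr rfl fun a _ => ?_
    unfold gradJ; ring
  have hpdl : ∀ (i : Fin n) (θi' : S → A i → ℝ), feasibleAgent i θi' →
      ∑ s, dvisit P (Function.update θstar i θi') γ ρ s *
          (∑ ai, θi' s ai * Qbar P θstar γ (r i) i s ai - Vval P θstar γ (r i) s)
      = (1-γ) * (Jval P (Function.update θstar i θi') γ (r i) ρ - Jval P θstar γ (r i) ρ) := by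
    intro i θi' hf
    rw [Jdiff hP hθstar hγ0 hγ1 hρ (r i) i hf,
        sum_dvisit_mul hP (feasible_update hθstar hf) hγ0 hγ1 hρ]
  constructor
  · -- NE → stationary
    intro hNE i θi' hθi'
    haveI : Nonempty (A i) := hAne i
    -- Step 1: greedy deviation shows Qbar ≤ V pointwise
    have hmax : ∀ s : S, ∃ am : A i, ∀ a : A i,
        Qbar P θstar γ (r i) i s a ≤ Qbar P θstar γ (r i) i s am := by
      intro s
      obtain ⟨am, -, h⟩ := Finset.exists_max_image Finset.univ
        (Qbar P θstar γ (r i) i s) Finset.univ_nonempty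
      exact ⟨am, fun a => h a (Finset.mem_univ a)⟩
    choose am ham using hmax
    set θg : S → A i → ℝ := fun s a => if a = am s then 1 else 0 with hθgdef
    have hθgf : feasibleAgent i θg := by
      intro s
      constructor
      · intro a; simp only [θg]; split <;> norm_num
      · simp [θg]
    have hterm : ∀ s, ∑ ai, θg s ai * Qbar P θstar γ (r i) i s ai
        = Qbar P θstar γ (r i) i s (am s) := by
      intro s; simp [θg, ite_mul, Finset.sum_ite_eq']
    have hnn : ∀ s ∈ Finset.univ, (0:ℝ) ≤ dvisit P (Function.update θstar i θg) γ ρ s *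
        (∑ ai, θg s ai * Qbar P θstar γ (r i) i s ai - Vval P θstar γ (r i) s) := by
      intro s _
      refine mul_nonneg (le_of_lt (hd _ (feasible_update hθstar hθgf) s)) ?_
      rw [hterm s, sub_nonneg, ← hsq i s]
      exact hconv i (θstar i) (hθstar i) s _ _ (ham s)
    have hsle : ∑ s, dvisit P (Function.update θstar i θg) γ ρ s *
        (∑ ai, θg s ai * Qbar P θstar γ (r i) i s ai - Vval P θstar γ (r i) s) ≤ 0 := by
      rw [hpdl i θg hθgf]
      have hle := hNE i θg hθgf
      nlinarith
    have hzero := (Finset.sum_eq_zero_iff_of_nonneg hnn).1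
      (le_antisymm hsle (Finset.sum_nonneg hnn))
    have key : ∀ (s : S) (ai : A i),
        Qbar P θstar γ (r i) i s ai ≤ Vval P θstar γ (r i) s := by
      intro s ai
      have h0 := hzero s (Finset.mem_univ s)
      have hdpos := hd _ (feasible_update hθstar hθgf) s
      have hfac : ∑ a, θg s a * Qbar P θstar γ (r i) i s a - Vval P θstar γ (r i) s = 0 := by
        rcases mul_eq_zero.1 h0 with h | h
        · exact absurd h (ne_of_gt hdpos)
        · exact h
      rw [hterm s] at hfac
      calc Qbar P θstar γ (r i) i s ai ≤ Qbar P θstar γ (r i) i s (am s) := ham s ai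
        _ = Vval P θstar γ (r i) s := by linarith
    -- Step 2
    rw [hgrad i θi']
    have hX : ∑ s, dvisit P θstar γ ρ s *
        (∑ ai, θi' s ai * Qbar P θstar γ (r i) i s ai - Vval P θstar γ (r i) s) ≤ 0 := by
      refine Finset.sum_nonpos fun s _ => ?_
      refine mul_nonpos_iff.mpr (Or.inl ⟨le_of_lt (hd θstar hθstar s), ?_⟩)
      rw [sub_nonpos]
      exact hconv i θi' hθi' s _ _ (key s)
    have hpos : (0:ℝ) ≤ 1/(1-γ) := by positivity
    nlinarith
  · -- stationary → NE
    intro hstat i θi' hθi'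
    have key : ∀ (s0 : S) (ai : A i),
        Qbar P θstar γ (r i) i s0 ai ≤ Vval P θstar γ (r i) s0 := by
      intro s0 ai
      set η : S → A i → ℝ := fun s a => if s = s0 then (if a = ai then 1 else 0)
        else θstar i s a with hηdef
      have hηf : feasibleAgent i η := by
        intro s
        by_cases h : s = s0
        · subst h
          constructor
          · intro a; simp only [η, if_pos rfl]; split <;> norm_num
          · simp [η]
        · constructor
          · intro a; simp only [η, if_neg h]; exact (hθstar i s).1 a
          · simp only [η, if_neg h]; exact (hθstar i s).2
      have hs := hstat i η hηf
      rw [hgrad i η] at hs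
      have hpos : (0:ℝ) < 1/(1-γ) := by positivity
      rw [show (0:ℝ) = (1/(1-γ)) * 0 by ring] at hs
      have hX := le_of_mul_le_mul_left hs hpos
      have hXeq : ∑ s, dvisit P θstar γ ρ s *
          (∑ a, η s a * Qbar P θstar γ (r i) i s a - Vval P θstar γ (r i) s)
          = dvisit P θstar γ ρ s0 *
            (Qbar P θstar γ (r i) i s0 ai - Vval P θstar γ (r i) s0) := by
        rw [Finset.sum_eq_single s0]
        · congr 1
          congr 1
          simp [η, ite_mul, Finset.sum_ite_eq']
        · intro s _ hne
          have : ∑ a, η s a * Qbar P θstar γ (r i) i s a = Vval P θstar γ (r i) s := by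
            simp only [η, if_neg hne]
            exact hsq i s
          rw [this, sub_self, mul_zero]
        · intro h; exact absurd (Finset.mem_univ s0) h
      rw [hXeq] at hX
      have hdpos := hd θstar hθstar s0
      nlinarith
    have hJ := hpdl i θi' hθi'
    have hX : ∑ s, dvisit P (Function.update θstar i θi') γ ρ s *
        (∑ ai, θi' s ai * Qbar P θstar γ (r i) i s ai - Vval P θstar γ (r i) s) ≤ 0 := by
      refine Finset.sum_nonpos fun s _ => ?_
      refine mul_nonpos_iff.mpr (Or.inl ⟨le_of_lt (hd _ (feasible_update hθstar hθi') s), ?_⟩)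
      rw [sub_nonpos]
      exact hconv i θi' hθi' s _ _ (key s)
    rw [hJ] at hX
    nlinarith
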